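/- Max-flow min-cut corollary (finite, integer capacities): in a finite directed network with integer capacities, if every s–t cut has capacity at least k, then there exists an integer-valued s–t flow of value at least k. -/

import Mathlib

/-- An integer-valued `s`–`t` flow on a finite network with capacities `c`. -/
structure IsFlow {V : Type*} [Fintype V] [DecidableEq V]
    (c : V → V → ℕ) (s t : V) (f : V → V → ℤ) : Prop where
  nonneg : ∀ u v, 0 ≤ f u v
  le_cap : ∀ u v, f u v ≤ (c u v : ℤ)
  conserve : ∀ v, v ≠ s → v ≠ t →
    (∑ u : V, f u v) = ∑ w : V, f v w

/-- The value of a flow: the net flow out of the source `s`. -/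
def flowValue {V : Type*} [Fintype V] [DecidableEq V]
    (s : V) (f : V → V → ℤ) : ℤ :=
  (∑ w : V, f s w) - ∑ u : V, f u s

/-- The capacity of an `s`–`t` cut given by a set `S` of vertices. -/
def cutCapacity {V : Type*} [Fintype V] [DecidableEq V]
    (c : V → V → ℕ) (S : Finset V) : ℕ :=
  ∑ u ∈ S, ∑ v ∈ Sᶜ, c u v

section Aux

variable {α : Type*} {r : α → α → Prop} {b : α}

/-- A chain can be replaced by a duplicate-free chain with the same endpoints. -/
lemma MFMC.nodup_chain_aux : ∀ (n : ℕ) (a : α) (l : List α), l.length ≤ n → List.Chain r a l →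
    l.getLastD a = b →
    ∃ l' : List α, List.Chain r a l' ∧ l'.getLastD a = b ∧ (a :: l').Nodup ∧ l' ⊆ l := by
  intro n
  induction n with
  | zero =>
    intro a l hlen hchain hlast
    have : l = [] := List.eq_nil_of_length_eq_zero (Nat.le_zero.mp hlen)
    subst this
    exact ⟨[], List.Chain.nil, hlast, by simp, by simp⟩
  | succ n ih =>
    intro a l hlen hchain hlast
    by_cases ha : a ∈ l
    · obtain ⟨l₁, l₂, rfl⟩ := List.append_of_mem ha
      have hchain₂ : List.Chain r a l₂ := by
        have h1 : List.Chain' r (a :: (l₁ ++ a :: l₂)) := hchain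
        have h2 : (a :: l₂) <:+ (a :: (l₁ ++ a :: l₂)) := by
          refine ⟨a :: l₁, by simp⟩
        exact (h1.suffix h2 : List.Chain' r (a :: l₂))
      have hlast₂ : l₂.getLastD a = b := by
        rcases l₂ with _ | ⟨c, l₃⟩
        · simpa using hlast
        · simpa [List.getLastD_eq_getLast?, List.getLast?_append,
            List.getLast?_cons_cons, List.getLast?_cons] using hlast
      have hlen₂ : l₂.length ≤ n := by
        have := hlen; simp [List.length_append] at this ⊢; omega
      obtain ⟨l', h1, h2, h3, h4⟩ := ih a l₂ hlen₂ hchain₂ hlast₂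
      exact ⟨l', h1, h2, h3, fun x hx => by simp [h4 hx]⟩
    · rcases l with _ | ⟨c, l₀⟩
      · exact ⟨[], List.Chain.nil, hlast, by simp, by simp⟩
      · have hrac : r a c := (List.chain_cons.mp hchain).1
        have hchain₀ : List.Chain r c l₀ := (List.chain_cons.mp hchain).2
        have hlast₀ : l₀.getLastD c = b := by
          rcases l₀ with _ | ⟨d, l₁⟩
          · simpa using hlast
          · exact List.getLastD_cons.symm.trans hlast
        obtain ⟨l', h1, h2, h3, h4⟩ := ih c l₀ (by simpa using hlen) hchain₀ hlast₀
        refine ⟨c :: l', List.chain_cons.mpr ⟨hrac, h1⟩, ?_, ?_, ?_⟩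
        · rcases l' with _ | ⟨d, l₁⟩ <;> exact List.getLastD_cons.trans h2
        · refine List.nodup_cons.mpr ⟨?_, h3⟩
          intro hmem
          rcases List.mem_cons.mp hmem with h | h
          · exact ha (h ▸ List.mem_cons_self (a := c) (l := l₀))
          · exact ha (List.mem_cons_of_mem c (h4 h))
        · intro x hx
          rcases List.mem_cons.mp hx with h | h
          · exact h ▸ List.mem_cons_self (a := c) (l := l₀)
          · exact List.mem_cons_of_mem c (h4 h)

lemma MFMC.map_fst_zip_tail : ∀ (L : List α), (L.zip L.tail).map Prod.fst = L.dropLast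
  | [] => by simp
  | [a] => by simp
  | a :: b :: l => by
    have := MFMC.map_fst_zip_tail (b :: l)
    simp only [List.zip, List.tail_cons, List.map_cons, List.dropLast_cons₂] at this ⊢
    simpa using this

lemma MFMC.map_snd_zip_tail (L : List α) : (L.zip L.tail).map Prod.snd = L.tail :=
  List.map_snd_zip (by cases L <;> simp)

lemma MFMC.rel_of_mem_zip_tail : ∀ {L : List α}, L.Chain' r → ∀ {u v : α},
    (u, v) ∈ L.zip L.tail → r u v
  | [] => by simp
  | [a] => by simp
  | a :: b :: l => fun hc u v hm => by
    simp only [List.tail_cons, List.zip_cons_cons, List.mem_cons] at hm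
    rcases hm with h | h
    · rw [Prod.mk.injEq] at h
      obtain ⟨rfl, rfl⟩ := h
      exact (List.isChain_cons_cons.mp hc).1
    · exact MFMC.rel_of_mem_zip_tail (L := b :: l) hc.tail h

variable {V : Type*} [Fintype V] [DecidableEq V]

lemma MFMC.count_le_one_of_nodup {β : Type*} [BEq β] [LawfulBEq β] :
    ∀ {l : List β}, l.Nodup → ∀ a : β, l.count a ≤ 1
  | [], _, _ => by simp
  | b :: l, h, a => by
    obtain ⟨hb, hl⟩ := List.nodup_cons.mp h
    rw [List.count_cons]
    by_cases hab : a = b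
    · subst hab
      rw [List.count_eq_zero.mpr hb]
      simp
    · simpa [beq_iff_eq, Ne.symm hab] using MFMC.count_le_one_of_nodup hl a

lemma MFMC.sum_count_fst (E : List (V × V)) (v : V) :
    ∑ w : V, E.count (v, w) = (E.map Prod.fst).count v := by
  induction E with
  | nil => simp
  | cons p E ih =>
    simp only [List.count_cons, List.map_cons, Finset.sum_add_distrib, ih]
    congr 1
    rcases p with ⟨x, y⟩
    by_cases hx : x = v
    · subst hx
      rw [Finset.sum_eq_single y]
      · simp
      · intro b _ hb
        simp [beq_iff_eq, Prod.ext_iff, (Ne.symm hb : ¬ y = b)]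
      · simp
    · rw [Finset.sum_eq_zero]
      · simp [beq_iff_eq, hx]
      · intro w _
        simp [beq_iff_eq, Prod.ext_iff, hx]

lemma MFMC.sum_count_snd (E : List (V × V)) (v : V) :
    ∑ u : V, E.count (u, v) = (E.map Prod.snd).count v := by
  induction E with
  | nil => simp
  | cons p E ih =>
    simp only [List.count_cons, List.map_cons, Finset.sum_add_distrib, ih]
    congr 1
    rcases p with ⟨x, y⟩
    by_cases hy : y = v
    · subst hy
      rw [Finset.sum_eq_single x]
      · simp
      · intro b _ hb
        simp [beq_iff_eq, Prod.ext_iff, (Ne.symm hb : ¬ x = b)]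
      · simp
    · rw [Finset.sum_eq_zero]
      · simp [beq_iff_eq, hy]
      · intro w _
        simp [beq_iff_eq, Prod.ext_iff, hy]

/-- Net outflow summed over a set equals the net flow across its boundary. -/
lemma MFMC.sum_net (g : V → V → ℤ) (S : Finset V) :
    ∑ u ∈ S, ((∑ w, g u w) - ∑ w, g w u) = ∑ u ∈ S, ∑ v ∈ Sᶜ, (g u v - g v u) := by
  have h : ∀ u ∈ S, (∑ w, g u w) - ∑ w, g w u
      = (∑ v ∈ S, (g u v - g v u)) + ∑ v ∈ Sᶜ, (g u v - g v u) := by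
    intro u _
    rw [Finset.sum_add_sum_compl, Finset.sum_sub_distrib]
  rw [Finset.sum_congr rfl h, Finset.sum_add_distrib]
  have h0 : ∑ u ∈ S, ∑ v ∈ S, (g u v - g v u) = 0 := by
    simp_rw [Finset.sum_sub_distrib]
    rw [Finset.sum_comm (s := S) (t := S) (f := fun u v => g v u)]
    simp
  rw [h0, zero_add]

/-- The main induction: any lower bound on all cut capacities is achieved by a flow. -/
lemma MFMC.main {V : Type*} [Fintype V] [DecidableEq V] (s t : V) (hst : s ≠ t) :
    ∀ (k : ℕ) (c : V → V → ℕ),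
      (∀ S : Finset V, s ∈ S → t ∉ S → k ≤ cutCapacity c S) →
      ∃ f : V → V → ℤ, IsFlow c s t f ∧ (k : ℤ) ≤ flowValue s f := by
  intro k
  induction k with
  | zero =>
    intro c _
    exact ⟨fun _ _ => 0, ⟨fun _ _ => le_refl 0, fun u v => Int.natCast_nonneg _,
      fun v _ _ => rfl⟩, by simp [flowValue]⟩
  | succ k ih =>
    intro c hcut
    classical
    set r : V → V → Prop := fun u v => 0 < c u v with hr
    -- Step 1: t is reachable from s through positive-capacity edges
    have hreach : Relation.ReflTransGen r s t := by
      by_contra hn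
      set S : Finset V := Finset.univ.filter (fun v => Relation.ReflTransGen r s v) with hS
      have hs : s ∈ S :=
        Finset.mem_filter.mpr ⟨Finset.mem_univ s, Relation.ReflTransGen.refl⟩
      have ht : t ∉ S := by
        rw [hS]
        simp only [Finset.mem_filter, Finset.mem_univ, true_and]
        exact hn
      have h0 : cutCapacity c S = 0 := by
        unfold cutCapacity
        refine Finset.sum_eq_zero fun u hu => Finset.sum_eq_zero fun v hv => ?_
        simp only [hS, Finset.mem_filter, Finset.mem_compl, Finset.mem_univ, true_and] at hu hv
        by_contra hne
        exact hv (hu.trans (Relation.ReflTransGen.single (Nat.pos_of_ne_zero hne)))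
      have := hcut S hs ht
      omega
    -- Step 2: extract a duplicate-free path L = s :: l from s to t
    obtain ⟨l0, hchain0, hlast0⟩ := List.exists_isChain_cons_of_relationReflTransGen hreach
    rw [List.getLast_eq_getLastD] at hlast0
    obtain ⟨l, hchain, hlastD, hnodup, -⟩ :=
      MFMC.nodup_chain_aux l0.length s l0 le_rfl hchain0 hlast0
    set L : List V := s :: l with hL
    have hlne : l ≠ [] := by
      rintro rfl
      exact hst (by simpa using hlastD)
    obtain ⟨a, l₁, rfl⟩ := List.exists_cons_of_ne_nil hlne
    have hLchain' : L.Chain' r := hchain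
    have hLlast : L.getLast (by simp [hL]) = t := by
      show (s :: a :: l₁).getLast (by simp) = t
      rw [List.getLast_eq_getLastD]
      exact hlastD
    have hLd : L.dropLast ++ [t] = L := by
      rw [← hLlast]
      exact List.dropLast_append_getLast _
    -- membership facts
    have hsdrop : s ∈ L.dropLast := by
      rw [hL]
      simp [List.dropLast_cons₂]
    have hstail : s ∉ L.tail := by
      have := List.nodup_cons.mp hnodup
      simpa [hL] using this.1
    have htdrop : t ∉ L.dropLast := by
      have hnd : (L.dropLast ++ [t]).Nodup := by rw [hLd]; exact hnodup
      have := List.disjoint_of_nodup_append hnd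
      intro hmem
      exact this hmem (by simp)
    have hdropnodup : L.dropLast.Nodup := hnodup.sublist (List.dropLast_sublist L)
    have htailnodup : L.tail.Nodup := hnodup.sublist (List.tail_sublist L)
    -- counts
    have hcount_eq : ∀ v : V, v ≠ s → v ≠ t → L.tail.count v = L.dropLast.count v := by
      intro v hvs hvt
      have h1 : L.count v = L.tail.count v := by
        rw [hL, List.count_cons]
        simp [hvs, Ne.symm hvs]
      have h2 : L.count v = L.dropLast.count v := by
        conv_lhs => rw [← hLd]
        rw [List.count_append, List.count_singleton']
        simp [hvt, Ne.symm hvt]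
      omega
    -- Step 3: the unit path flow
    set edges : List (V × V) := L.zip L.tail with hedges
    set Pn : V → V → ℕ := fun u v => edges.count (u, v) with hPn
    have hPout : ∀ v, ∑ w, Pn v w = L.dropLast.count v := by
      intro v
      simp only [hPn]
      rw [MFMC.sum_count_fst, hedges, MFMC.map_fst_zip_tail]
    have hPin : ∀ v, ∑ u, Pn u v = L.tail.count v := by
      intro v
      simp only [hPn]
      rw [MFMC.sum_count_snd, hedges, MFMC.map_snd_zip_tail]
    have hedgesnodup : edges.Nodup := by
      apply List.Nodup.of_map Prod.fst
      rw [hedges, MFMC.map_fst_zip_tail]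
      exact hdropnodup
    have hP1 : ∀ u v, Pn u v ≤ 1 := by
      intro u v
      simp only [hPn]
      exact MFMC.count_le_one_of_nodup hedgesnodup (u, v)
    have hPc : ∀ u v, Pn u v ≤ c u v := by
      intro u v
      rcases Nat.eq_zero_or_pos (Pn u v) with h | h
      · omega
      · have hmem : (u, v) ∈ edges := List.count_pos_iff.mp h
        have : 0 < c u v := MFMC.rel_of_mem_zip_tail hLchain' hmem
        have := hP1 u v
        omega
    set c' : V → V → ℕ := fun u v => c u v - Pn u v + Pn v u with hc'def
    have hc' : ∀ u v, (c' u v : ℤ) = (c u v : ℤ) - (Pn u v : ℤ) + (Pn v u : ℤ) := by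
      intro u v
      rw [hc'def]
      push_cast [Nat.cast_sub (hPc u v)]
      ring
    -- net path flow out of each vertex
    have hnetP : ∀ u : V, (∑ w, (Pn u w : ℤ)) - ∑ w, (Pn w u : ℤ)
        = (if u ∈ L.dropLast then 1 else 0) - (if u ∈ L.tail then 1 else 0) := by
      intro u
      have h1 : (∑ w, (Pn u w : ℤ)) = (L.dropLast.count u : ℤ) := by
        rw [← Nat.cast_sum, hPout]
      have h2 : (∑ w, (Pn w u : ℤ)) = (L.tail.count u : ℤ) := by
        rw [← Nat.cast_sum, hPin]
      rw [h1, h2]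
      congr 1
      · rcases Classical.em (u ∈ L.dropLast) with h | h
        · simp [h, List.count_eq_one_of_mem hdropnodup h]
        · simp [h, List.count_eq_zero_of_not_mem h]
      · rcases Classical.em (u ∈ L.tail) with h | h
        · simp [h, List.count_eq_one_of_mem htailnodup h]
        · simp [h, List.count_eq_zero_of_not_mem h]
    -- Step 4: every cut still has capacity ≥ k for c'
    have hcut' : ∀ S : Finset V, s ∈ S → t ∉ S → k ≤ cutCapacity c' S := by
      intro S hs ht
      have hkey := MFMC.sum_net (fun u v => (Pn u v : ℤ)) S
      have hone : ∑ u ∈ S, ((∑ w, (Pn u w : ℤ)) - ∑ w, (Pn w u : ℤ)) = 1 := by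
        rw [Finset.sum_eq_single s]
        · rw [hnetP s]
          simp [hsdrop, hstail]
        · intro u hu hune
          have hut : u ≠ t := fun h => ht (h ▸ hu)
          rw [hnetP u]
          have hcp := hcount_eq u hune hut
          rcases Classical.em (u ∈ L.tail) with h | h
          · have : u ∈ L.dropLast := by
              have := List.count_pos_iff.mpr h
              rw [hcp] at this
              exact List.count_pos_iff.mp this
            simp [h, this]
          · have : u ∉ L.dropLast := by
              intro hmem
              have := List.count_pos_iff.mpr hmem
              rw [← hcp] at this
              exact h (List.count_pos_iff.mp this)
            simp [h, this]
        · intro h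
          exact absurd hs h
      have hcutZ : (cutCapacity c' S : ℤ) = (cutCapacity c S : ℤ) - 1 := by
        unfold cutCapacity
        push_cast
        have : ∀ u ∈ S, ∀ v ∈ Sᶜ, (c' u v : ℤ)
            = (c u v : ℤ) - ((Pn u v : ℤ) - (Pn v u : ℤ)) := by
          intro u _ v _
          rw [hc' u v]; ring
        rw [Finset.sum_congr rfl fun u hu => Finset.sum_congr rfl fun v hv => this u hu v hv]
        simp_rw [Finset.sum_sub_distrib] at hkey hone ⊢
        linarith [hkey, hone]
      have hge := hcut S hs ht
      have : (k : ℤ) ≤ (cutCapacity c' S : ℤ) := by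
        rw [hcutZ]
        have : ((k : ℤ) + 1) ≤ (cutCapacity c S : ℤ) := by exact_mod_cast hge
        omega
      exact_mod_cast this
    -- Step 5: get a flow for c' and augment it along the path
    obtain ⟨f', hf', hval'⟩ := ih c' hcut'
    set g : V → V → ℤ := fun u v => f' u v + (Pn u v : ℤ) with hg
    set f : V → V → ℤ := fun u v => max 0 (g u v - g v u) with hf
    have hnet : ∀ u v, f u v - f v u = g u v - g v u := by
      intro u v
      rw [hf]
      simp only
      rcases le_total (g u v) (g v u) with h | h
      · rw [max_eq_left (by linarith), max_eq_right (by linarith)]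
        ring
      · rw [max_eq_right (by linarith), max_eq_left (by linarith)]
        ring
    have hsumnet : ∀ v : V, (∑ u, f u v) - (∑ w, f v w)
        = ((∑ u, f' u v) - ∑ w, f' v w) + ((∑ u, (Pn u v : ℤ)) - ∑ w, (Pn v w : ℤ)) := by
      intro v
      have h1 : (∑ u, f u v) - (∑ w, f v w) = ∑ u, (f u v - f v u) := by
        rw [Finset.sum_sub_distrib]
      rw [h1, Finset.sum_congr rfl fun u _ => hnet u v, Finset.sum_sub_distrib]
      simp only [hg]
      rw [Finset.sum_add_distrib, Finset.sum_add_distrib]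
      ring
    refine ⟨f, ⟨fun u v => le_max_left _ _, ?_, ?_⟩, ?_⟩
    · -- capacity
      intro u v
      rcases le_or_gt (g u v - g v u) 0 with h | h
      · rw [hf]
        simp only
        rw [max_eq_left h]
        exact Int.natCast_nonneg _
      · rw [hf]
        simp only
        rw [max_eq_right h.le]
        have h1 : f' u v ≤ (c' u v : ℤ) := hf'.le_cap u v
        have h2 : 0 ≤ f' v u := hf'.nonneg v u
        have h3 := hc' u v
        simp only [hg]
        linarith
    · -- conservation
      intro v hvs hvt
      have h0 := hsumnet v
      have h1 : (∑ u, f' u v) - ∑ w, f' v w = 0 := by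
        rw [hf'.conserve v hvs hvt]; ring
      have h2 : (∑ u, (Pn u v : ℤ)) - ∑ w, (Pn v w : ℤ) = 0 := by
        have hnp := hnetP v
        have hcp := hcount_eq v hvs hvt
        rcases Classical.em (v ∈ L.tail) with h | h
        · have hd : v ∈ L.dropLast := by
            have := List.count_pos_iff.mpr h
            rw [hcp] at this
            exact List.count_pos_iff.mp this
          rw [if_pos hd, if_pos h] at hnp
          linarith [hnp]
        · have hd : v ∉ L.dropLast := by
            intro hmem
            have := List.count_pos_iff.mpr hmem
            rw [← hcp] at this
            exact h (List.count_pos_iff.mp this)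
          rw [if_neg hd, if_neg h] at hnp
          linarith [hnp]
      have : (∑ u, f u v) - (∑ w, f v w) = 0 := by rw [h0, h1, h2]; ring
      linarith
    · -- value
      have h0 := hsumnet s
      have h1 : (∑ u, (Pn u s : ℤ)) - ∑ w, (Pn s w : ℤ) = -1 := by
        have hnp := hnetP s
        rw [if_pos hsdrop, if_neg hstail] at hnp
        linarith [hnp]
      have hvf : flowValue s f = flowValue s f' + 1 := by
        unfold flowValue
        have := hsumnet s
        -- (∑ u, f u s) - (∑ w, f s w) = ((∑ u, f' u s) - ∑ w, f' s w) + (-1)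
        linarith [this, h1]
      rw [hvf]
      push_cast
      linarith [hval']

end Aux

/-- Max-flow min-cut corollary: if every `s`–`t` cut has capacity at least `k`,
there is an integer-valued `s`–`t` flow of value at least `k`. -/
theorem exists_flow_of_cut_capacity_ge {V : Type*} [Fintype V] [DecidableEq V]
    (c : V → V → ℕ) (s t : V) (hst : s ≠ t) (k : ℕ)
    (hcut : ∀ S : Finset V, s ∈ S → t ∉ S → k ≤ cutCapacity c S) :
    ∃ f : V → V → ℤ, IsFlow c s t f ∧ (k : ℤ) ≤ flowValue s f :=
  MFMC.main s t hst k c hcut
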